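/- Let d ≥ 3, ℓ ≥ d+1, n with ℓ² ≤ n, and suppose (h_k)_{k=d+1}^{ℓ} are nonnegative reals such that Σ_{i=k}^{ℓ} h_i ≤ n^d/k^{d+1} + n^{d-1}/k^{d-1} for all k. Then Σ_{k=d+1}^{ℓ} h_k·k^{d+1} ≤ C_d·n^d·log ℓ for a constant C_d depending only on d. -/

import Mathlib

open Finset

/-- telescoping sum -/
lemma tele (f : ℕ → ℝ) (a b : ℕ) (hab : a ≤ b) :
    ∑ k ∈ Finset.Icc (a+1) b, (f k - f (k-1)) = f b - f a := by
  induction b, hab using Nat.le_induction with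
  | base => simp
  | succ b hb ih =>
    rw [Finset.sum_Icc_succ_top (by omega), ih]
    simp only [Nat.add_sub_cancel]
    ring

/-- Abel summation -/
lemma abel_sum (h f : ℕ → ℝ) (a b : ℕ) (hab : a ≤ b) :
    ∑ k ∈ Finset.Icc a b, h k * f k =
      f a * (∑ i ∈ Finset.Icc a b, h i)
      + ∑ k ∈ Finset.Icc (a+1) b, (f k - f (k-1)) * (∑ i ∈ Finset.Icc k b, h i) := by
  induction b, hab using Nat.le_induction with
  | base => simp [mul_comm]
  | succ b hb ih =>
    rw [Finset.sum_Icc_succ_top (show a ≤ b+1 by omega), ih,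
        Finset.sum_Icc_succ_top (show a ≤ b+1 by omega),
        Finset.sum_Icc_succ_top (show a+1 ≤ b+1 by omega)]
    have e1 : ∀ k ∈ Finset.Icc (a+1) b,
        (f k - f (k-1)) * (∑ i ∈ Finset.Icc k (b+1), h i)
        = (f k - f (k-1)) * (∑ i ∈ Finset.Icc k b, h i) + ((f k - f (k-1)) * h (b+1)) := by
      intro k hk
      simp only [Finset.mem_Icc] at hk
      rw [Finset.sum_Icc_succ_top (by omega)]
      ring
    rw [Finset.sum_congr rfl e1, Finset.sum_add_distrib, ← Finset.sum_mul, tele f a b hb]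
    simp only [Nat.add_sub_cancel, Finset.Icc_self, Finset.sum_singleton]
    ring

/-- x^m - (x-1)^m ≤ m x^(m-1) for real x ≥ 1 -/
lemma pow_diff_le (x : ℝ) (hx : 1 ≤ x) (m : ℕ) :
    x ^ m - (x - 1) ^ m ≤ m * x ^ (m - 1) := by
  have h0 : (0:ℝ) ≤ x - 1 := by linarith
  have := geom_sum₂_mul x (x-1) m
  rw [show x - (x-1) = 1 by ring, mul_one] at this
  rw [← this]
  calc ∑ i ∈ range m, x ^ i * (x-1) ^ (m - 1 - i)
      ≤ ∑ i ∈ range m, x ^ (m-1) := by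
        apply Finset.sum_le_sum
        intro i hi
        simp only [Finset.mem_range] at hi
        calc x ^ i * (x-1) ^ (m-1-i) ≤ x ^ i * x ^ (m-1-i) := by
              apply mul_le_mul_of_nonneg_left _ (by positivity)
              exact pow_le_pow_left₀ h0 (by linarith) _
          _ = x ^ (m-1) := by rw [← pow_add]; congr 1; omega
    _ = m * x ^ (m-1) := by rw [Finset.sum_const, Finset.card_range, nsmul_eq_mul]

set_option maxHeartbeats 1000000 in
theorem stmt7 (d : ℕ) (hd : 3 ≤ d) :
    ∃ C : ℝ, 0 < C ∧ ∀ (ℓ n : ℕ) (h : ℕ → ℝ),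
      d + 1 ≤ ℓ → ℓ ^ 2 ≤ n → (∀ k, 0 ≤ h k) →
      (∀ k, d + 1 ≤ k → k ≤ ℓ →
        ∑ i ∈ Finset.Icc k ℓ, h i ≤
          (n : ℝ) ^ d / (k : ℝ) ^ (d + 1) + (n : ℝ) ^ (d - 1) / (k : ℝ) ^ (d - 1)) →
      ∑ k ∈ Finset.Icc (d + 1) ℓ, h k * (k : ℝ) ^ (d + 1) ≤
        C * (n : ℝ) ^ d * Real.log ℓ := by
  refine ⟨2 * d + 4, by positivity, ?_⟩
  intro ℓ n h hℓ hn hpos hH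
  have hn16 : 16 ≤ n :=
    le_trans (by simpa using Nat.pow_le_pow_left (show 4 ≤ ℓ by omega) 2) hn
  have hnR : (1:ℝ) ≤ (n:ℝ) := by exact_mod_cast by omega
  have hℓR : (4:ℝ) ≤ (ℓ:ℝ) := by exact_mod_cast by omega
  have hlog1 : (1:ℝ) ≤ Real.log ℓ := by
    rw [Real.le_log_iff_exp_le (by linarith)]
    calc Real.exp 1 ≤ 2.7182818286 := (Real.exp_one_lt_d9).le
      _ ≤ (ℓ:ℝ) := by linarith
  have hlog0 : (0:ℝ) ≤ Real.log ℓ := by linarith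
  have hnd : (0:ℝ) ≤ (n:ℝ)^d := by positivity
  -- Abel
  rw [abel_sum h (fun k => (k:ℝ)^(d+1)) (d+1) ℓ hℓ]
  -- head term bound
  have hHead : ((d+1:ℕ):ℝ)^(d+1) * (∑ i ∈ Finset.Icc (d+1) ℓ, h i) ≤ 2 * (n:ℝ)^d := by
    have hb := hH (d+1) le_rfl hℓ
    have hdp : (0:ℝ) < ((d+1:ℕ):ℝ) := by positivity
    have h1 : ((d+1:ℕ):ℝ)^(d+1) * ((n:ℝ)^d / ((d+1:ℕ):ℝ)^(d+1) + (n:ℝ)^(d-1) / ((d+1:ℕ):ℝ)^(d-1))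
        = (n:ℝ)^d + ((d+1:ℕ):ℝ)^2 * (n:ℝ)^(d-1) := by
      have key : ((d:ℝ)+1)^(d+1) = ((d:ℝ)+1)^(d-1) * ((d:ℝ)+1)^2 := by
        rw [← pow_add]; congr 1; omega
      push_cast
      field_simp
      rw [key]; ring
    have h2 : ((d+1:ℕ):ℝ)^2 * (n:ℝ)^(d-1) ≤ (n:ℝ)^d := by
      have hle : ((d+1:ℕ):ℝ)^2 ≤ (n:ℝ) := by
        have : ((d+1)^2 : ℕ) ≤ n := le_trans (Nat.pow_le_pow_left hℓ 2) hn
        exact_mod_cast this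
      calc ((d+1:ℕ):ℝ)^2 * (n:ℝ)^(d-1) ≤ (n:ℝ) * (n:ℝ)^(d-1) := by
            apply mul_le_mul_of_nonneg_right hle (by positivity)
        _ = (n:ℝ)^d := by rw [← pow_succ']; congr 1; omega
    calc ((d+1:ℕ):ℝ)^(d+1) * (∑ i ∈ Finset.Icc (d+1) ℓ, h i)
        ≤ ((d+1:ℕ):ℝ)^(d+1) * ((n:ℝ)^d / ((d+1:ℕ):ℝ)^(d+1) + (n:ℝ)^(d-1) / ((d+1:ℕ):ℝ)^(d-1)) :=
          mul_le_mul_of_nonneg_left hb (by positivity)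
      _ = (n:ℝ)^d + ((d+1:ℕ):ℝ)^2 * (n:ℝ)^(d-1) := h1
      _ ≤ 2 * (n:ℝ)^d := by linarith
  -- tail term bound
  have hTail : ∑ k ∈ Finset.Icc (d+1+1) ℓ, (((k:ℕ):ℝ)^(d+1) - ((k-1:ℕ):ℝ)^(d+1)) * (∑ i ∈ Finset.Icc k ℓ, h i)
      ≤ (d+1) * (n:ℝ)^d * Real.log ℓ + (d+1) * (n:ℝ)^d := by
    have step : ∀ k ∈ Finset.Icc (d+1+1) ℓ,
        (((k:ℕ):ℝ)^(d+1) - ((k-1:ℕ):ℝ)^(d+1)) * (∑ i ∈ Finset.Icc k ℓ, h i)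
        ≤ (d+1) * ((n:ℝ)^d * (Real.log k - Real.log (k-1:ℕ))) + (d+1) * ((n:ℝ)^(d-1) * k) := by
      intro k hk
      simp only [Finset.mem_Icc] at hk
      have hk1 : (1:ℝ) ≤ (k:ℝ) := by exact_mod_cast by omega
      have hk0 : (0:ℝ) < (k:ℝ) := by linarith
      have hcast : ((k-1:ℕ):ℝ) = (k:ℝ) - 1 := by
        rw [Nat.cast_sub (by omega)]; norm_num
      have hΔ : ((k:ℕ):ℝ)^(d+1) - ((k-1:ℕ):ℝ)^(d+1) ≤ (d+1) * (k:ℝ)^d := by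
        rw [hcast]
        have := pow_diff_le (k:ℝ) hk1 (d+1)
        simpa using this
      have hΔ0 : (0:ℝ) ≤ ((k:ℕ):ℝ)^(d+1) - ((k-1:ℕ):ℝ)^(d+1) := by
        rw [hcast]
        have : ((k:ℝ)-1)^(d+1) ≤ (k:ℝ)^(d+1) := pow_le_pow_left₀ (by linarith) (by linarith) _
        linarith
      have hHk := hH k (by omega) hk.2
      have hHk0 : 0 ≤ ∑ i ∈ Finset.Icc k ℓ, h i := Finset.sum_nonneg fun i _ => hpos i
      have hmul : (((k:ℕ):ℝ)^(d+1) - ((k-1:ℕ):ℝ)^(d+1)) * (∑ i ∈ Finset.Icc k ℓ, h i)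
          ≤ ((d+1) * (k:ℝ)^d) * ((n:ℝ)^d / (k:ℝ)^(d+1) + (n:ℝ)^(d-1) / (k:ℝ)^(d-1)) :=
        mul_le_mul hΔ hHk hHk0 (by positivity)
      have heq : ((d+1:ℝ) * (k:ℝ)^d) * ((n:ℝ)^d / (k:ℝ)^(d+1) + (n:ℝ)^(d-1) / (k:ℝ)^(d-1))
          = (d+1) * ((n:ℝ)^d * (1/(k:ℝ))) + (d+1) * ((n:ℝ)^(d-1) * k) := by
        have e1 : (k:ℝ)^(d+1) = (k:ℝ)^d * (k:ℝ) := by rw [pow_succ]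
        have e2 : (k:ℝ)^d = (k:ℝ)^(d-1) * (k:ℝ) := by rw [← pow_succ]; congr 1; omega
        rw [e1]
        field_simp
        rw [e2]; ring
      have hk2 : (2:ℝ) ≤ (k:ℝ) := by exact_mod_cast by omega
      have hkm1 : (0:ℝ) < (k:ℝ) - 1 := by linarith
      have hlogstep : 1/(k:ℝ) ≤ Real.log k - Real.log (k-1:ℕ) := by
        rw [hcast]
        have hlog : Real.log ((k:ℝ)-1) - Real.log (k:ℝ) ≤ ((k:ℝ)-1)/(k:ℝ) - 1 := by
          have h0 := Real.log_le_sub_one_of_pos (div_pos hkm1 hk0)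
          rwa [Real.log_div (ne_of_gt hkm1) (ne_of_gt hk0)] at h0
        have he : ((k:ℝ)-1)/(k:ℝ) - 1 = -(1/(k:ℝ)) := by field_simp; ring
        rw [he] at hlog
        linarith
      calc (((k:ℕ):ℝ)^(d+1) - ((k-1:ℕ):ℝ)^(d+1)) * (∑ i ∈ Finset.Icc k ℓ, h i)
          ≤ (d+1) * ((n:ℝ)^d * (1/(k:ℝ))) + (d+1) * ((n:ℝ)^(d-1) * k) := by
            rw [← heq]; exact hmul
        _ ≤ (d+1) * ((n:ℝ)^d * (Real.log k - Real.log (k-1:ℕ))) + (d+1) * ((n:ℝ)^(d-1) * k) := by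
            have : (n:ℝ)^d * (1/(k:ℝ)) ≤ (n:ℝ)^d * (Real.log k - Real.log (k-1:ℕ)) :=
              mul_le_mul_of_nonneg_left hlogstep hnd
            nlinarith [this]
    calc ∑ k ∈ Finset.Icc (d+1+1) ℓ, (((k:ℕ):ℝ)^(d+1) - ((k-1:ℕ):ℝ)^(d+1)) * (∑ i ∈ Finset.Icc k ℓ, h i)
        ≤ ∑ k ∈ Finset.Icc (d+1+1) ℓ, ((d+1) * ((n:ℝ)^d * (Real.log k - Real.log (k-1:ℕ))) + (d+1) * ((n:ℝ)^(d-1) * k)) :=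
          Finset.sum_le_sum step
      _ = (d+1) * (n:ℝ)^d * (∑ k ∈ Finset.Icc (d+1+1) ℓ, (Real.log k - Real.log (k-1:ℕ)))
          + (d+1) * (n:ℝ)^(d-1) * (∑ k ∈ Finset.Icc (d+1+1) ℓ, (k:ℝ)) := by
        rw [Finset.sum_add_distrib, Finset.mul_sum, Finset.mul_sum]
        congr 1 <;> (apply Finset.sum_congr rfl; intro k _; ring)
      _ ≤ (d+1) * (n:ℝ)^d * Real.log ℓ + (d+1) * (n:ℝ)^d := by
        have t1 : ∑ k ∈ Finset.Icc (d+1+1) ℓ, (Real.log k - Real.log (k-1:ℕ)) ≤ Real.log ℓ := by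
          have ht := tele (fun k => Real.log (k:ℕ)) (d+1) ℓ hℓ
          rw [ht]
          have : (0:ℝ) ≤ Real.log ((d+1:ℕ):ℝ) := Real.log_nonneg (by exact_mod_cast by omega)
          linarith
        have t2 : ∑ k ∈ Finset.Icc (d+1+1) ℓ, (k:ℝ) ≤ (ℓ:ℝ)^2 := by
          calc ∑ k ∈ Finset.Icc (d+1+1) ℓ, (k:ℝ) ≤ ∑ k ∈ Finset.Icc (d+1+1) ℓ, (ℓ:ℝ) := by
                apply Finset.sum_le_sum; intro k hk
                simp only [Finset.mem_Icc] at hk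
                exact_mod_cast hk.2
            _ = (Finset.Icc (d+1+1) ℓ).card * (ℓ:ℝ) := by rw [Finset.sum_const, nsmul_eq_mul]
            _ ≤ (ℓ:ℝ) * (ℓ:ℝ) := by
                apply mul_le_mul_of_nonneg_right _ (by linarith)
                rw [Nat.card_Icc]
                exact_mod_cast by omega
            _ = (ℓ:ℝ)^2 := by ring
        have t3 : (d+1:ℝ) * (n:ℝ)^(d-1) * (∑ k ∈ Finset.Icc (d+1+1) ℓ, (k:ℝ)) ≤ (d+1) * (n:ℝ)^d := by
          have hsum0 : (0:ℝ) ≤ ∑ k ∈ Finset.Icc (d+1+1) ℓ, (k:ℝ) :=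
            Finset.sum_nonneg fun k _ => by positivity
          have hℓ2n : ((ℓ:ℝ))^2 ≤ (n:ℝ) := by exact_mod_cast hn
          calc (d+1:ℝ) * (n:ℝ)^(d-1) * (∑ k ∈ Finset.Icc (d+1+1) ℓ, (k:ℝ))
              ≤ (d+1:ℝ) * (n:ℝ)^(d-1) * (n:ℝ) := by
                apply mul_le_mul_of_nonneg_left _ (by positivity)
                linarith
            _ = (d+1) * (n:ℝ)^d := by
                rw [mul_assoc, ← pow_succ]
                congr 2
                omega
        have t1' : (d+1:ℝ) * (n:ℝ)^d * (∑ k ∈ Finset.Icc (d+1+1) ℓ, (Real.log k - Real.log (k-1:ℕ)))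
            ≤ (d+1) * (n:ℝ)^d * Real.log ℓ :=
          mul_le_mul_of_nonneg_left t1 (by positivity)
        linarith
  -- combine
  -- (goal already beta-reduced)
  set L := Real.log (ℓ:ℝ) with hL
  set N := (n:ℝ)^d with hN
  have e2 : 2*N ≤ 2*(N*L) := by nlinarith [mul_nonneg hnd (sub_nonneg.2 hlog1)]
  have e4 : ((d:ℝ)+1)*N ≤ ((d:ℝ)+1)*(N*L) := by
    nlinarith [mul_nonneg (mul_nonneg (show (0:ℝ) ≤ (d:ℝ)+1 by positivity) hnd)
      (sub_nonneg.2 hlog1)]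
  have hT : ∑ k ∈ Finset.Icc (d+1+1) ℓ, ((k:ℝ)^(d+1) - ((k-1:ℕ):ℝ)^(d+1)) * (∑ i ∈ Finset.Icc k ℓ, h i)
      ≤ ((d:ℝ)+1) * (N*L) + ((d:ℝ)+1) * N := by
    have := hTail
    push_cast at this ⊢
    nlinarith [this]
  have hH2 : ((d+1:ℕ):ℝ)^(d+1) * (∑ i ∈ Finset.Icc (d+1) ℓ, h i) ≤ 2*N := hHead
  nlinarith [hT, hH2, e2, e4]
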